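/- For s, t > 0, s + t > 1, s ≠ 1, and q ∈ (0,1), the four points q₁ = (0, qt/((t−s)q + s)), q₂ = ((1−q)s²/((t−1)(s+t)q + s), t(s + q(t−1))/((t−1)(s+t)q + s)), q₃ = ((s + q(t−1))/((s+t−2)q + 1), (1−q)t/((s+t−2)q + 1)), q₄ = (q, 0) all lie on the conic t²x² + (4q²(t−1)t + 2qt(s−t+2) − 2st)xy + ((1−q)s + qt)²y² − 2qt²x − 2qt((1−q)s + qt)y + q²t² = 0. -/

import Mathlib

theorem stmt9 (s t q : ℝ) (hs : 0 < s) (ht : 0 < t) (hst : 1 < s + t)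
    (hs1 : s ≠ 1) (hq : q ∈ Set.Ioo (0 : ℝ) 1) :
    let conic : ℝ → ℝ → Prop := fun x y =>
      t ^ 2 * x ^ 2 + (4 * q ^ 2 * (t - 1) * t + 2 * q * t * (s - t + 2) - 2 * s * t) * x * y +
        ((1 - q) * s + q * t) ^ 2 * y ^ 2 - 2 * q * t ^ 2 * x -
        2 * q * t * ((1 - q) * s + q * t) * y + q ^ 2 * t ^ 2 = 0
    conic 0 (q * t / ((t - s) * q + s)) ∧
    conic ((1 - q) * s ^ 2 / ((t - 1) * (s + t) * q + s))
          (t * (s + q * (t - 1)) / ((t - 1) * (s + t) * q + s)) ∧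
    conic ((s + q * (t - 1)) / ((s + t - 2) * q + 1))
          ((1 - q) * t / ((s + t - 2) * q + 1)) ∧
    conic q 0 := by
  obtain ⟨hq0, hq1⟩ := hq
  intro conic
  have h1 : (t - s) * q + s ≠ 0 := by nlinarith
  have h2 : (t - 1) * (s + t) * q + s ≠ 0 := by nlinarith [mul_pos ht (by linarith : (0:ℝ) < s + t - 1), mul_pos hq0 (mul_pos ht (by linarith : (0:ℝ) < s + t - 1))]
  have h3 : (s + t - 2) * q + 1 ≠ 0 := by nlinarith
  refine ⟨?_, ?_, ?_, ?_⟩ <;> simp only [conic] <;> field_simp [(by convert h1 using 1; ring : q * (t - s) + s ≠ 0), (by convert h2 using 1; ring : q * (t - 1) * (s + t) + s ≠ 0), (by convert h3 using 1; ring : q * (s + t - 2) + 1 ≠ 0)] <;> ring
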